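/- If G is an edgewise strongly shellable graph and H is a quotient graph of G via a quotient map f, then H is also edgewise strongly shellable. -/

import Mathlib

open scoped Classical

def StronglyShellable {α : Type*} [DecidableEq α] (F : Finset (Finset α)) : Prop :=
  ∃ l : List (Finset α), l.Nodup ∧ l.toFinset = F ∧
    ∀ i j : Fin l.length, (i : ℕ) < (j : ℕ) →
      ∃ k : Fin l.length, (k : ℕ) < (j : ℕ) ∧
        (l.get j \ l.get k).card = 1 ∧
        l.get i ∩ l.get j ⊆ l.get k ∧ l.get k ⊆ l.get i ∪ l.get j

def edgeSets {V : Type*} [Fintype V] [DecidableEq V] (G : SimpleGraph V) [DecidableRel G.Adj] :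
    Finset (Finset V) :=
  G.edgeFinset.image (Sym2.lift ⟨fun u v => ({u, v} : Finset V), fun u v => Finset.pair_comm u v⟩)

lemma mem_edgeSets_iff {V : Type*} [Fintype V] [DecidableEq V] (G : SimpleGraph V)
    [DecidableRel G.Adj] (S : Finset V) :
    S ∈ edgeSets G ↔ ∃ u v, G.Adj u v ∧ S = {u, v} := by
  constructor
  · intro hS
    simp only [edgeSets, Finset.mem_image] at hS
    obtain ⟨e, he, rfl⟩ := hS
    induction e using Sym2.ind with
    | _ u v =>
      exact ⟨u, v, by simpa [SimpleGraph.mem_edgeFinset] using he, by simp⟩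
  · rintro ⟨u, v, huv, rfl⟩
    simp only [edgeSets, Finset.mem_image]
    exact ⟨s(u, v), by simpa [SimpleGraph.mem_edgeFinset] using huv, by simp⟩

lemma card_of_mem_edgeSets {V : Type*} [Fintype V] [DecidableEq V] (G : SimpleGraph V)
    [DecidableRel G.Adj] {S : Finset V} (hS : S ∈ edgeSets G) : S.card = 2 := by
  obtain ⟨u, v, huv, rfl⟩ := (mem_edgeSets_iff G S).1 hS
  exact Finset.card_pair huv.ne

/-- If H is a quotient graph of an ESS graph G, then H is also ESS. -/
theorem stmt8 {VG VH : Type*} [Fintype VG] [DecidableEq VG] [Fintype VH] [DecidableEq VH]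
    (G : SimpleGraph VG) (H : SimpleGraph VH) [DecidableRel G.Adj] [DecidableRel H.Adj]
    (f : VG → VH) (hsurj : Function.Surjective f)
    (ha : ∀ u₁ u₂ : VG, G.Adj u₁ u₂ → f u₁ ≠ f u₂ → H.Adj (f u₁) (f u₂))
    (hb : ∀ v₁ v₂ : VH, H.Adj v₁ v₂ → ∃ u₁ u₂ : VG, G.Adj u₁ u₂ ∧ f u₁ = v₁ ∧ f u₂ = v₂)
    (hESS : StronglyShellable (edgeSets G)) :
    StronglyShellable (edgeSets H) := by
  classical
  obtain ⟨l, hnd, htf, hsh⟩ := hESS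
  -- every edge of H is the image of an edge of G appearing in the list
  have hex : ∀ F : Finset VH, F ∈ edgeSets H →
      ∃ n : ℕ, ∃ hn : n < l.length, Finset.image f (l.get ⟨n, hn⟩) = F := by
    intro F hF
    obtain ⟨v₁, v₂, hadj, rfl⟩ := (mem_edgeSets_iff H F).1 hF
    obtain ⟨u₁, u₂, hG, h1, h2⟩ := hb v₁ v₂ hadj
    have hmem : ({u₁, u₂} : Finset VG) ∈ l := by
      rw [← List.mem_toFinset, htf]
      exact (mem_edgeSets_iff G _).2 ⟨u₁, u₂, hG, rfl⟩
    obtain ⟨n, hn⟩ := List.mem_iff_get.1 hmem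
    exact ⟨n, n.2, by rw [hn]; simp [Finset.image_insert, h1, h2]⟩
  -- the minimal preimage index
  set m : Finset VH → ℕ := fun F => if h : F ∈ edgeSets H then Nat.find (hex F h) else 0 with hm
  have hm_lt : ∀ F (hF : F ∈ edgeSets H), m F < l.length := by
    intro F hF
    have := Nat.find_spec (hex F hF)
    simp only [hm, dif_pos hF]
    exact this.1
  have hm_eq : ∀ F (hF : F ∈ edgeSets H), Finset.image f (l.get ⟨m F, hm_lt F hF⟩) = F := by
    intro F hF
    have h2 := (Nat.find_spec (hex F hF)).2
    simp only [hm, dif_pos hF]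
    convert h2 using 2 <;> simp [hm, dif_pos hF]
  have hm_min : ∀ F (hF : F ∈ edgeSets H) (n : ℕ) (hn : n < l.length),
      Finset.image f (l.get ⟨n, hn⟩) = F → m F ≤ n := by
    intro F hF n hn heq
    simp only [hm, dif_pos hF]
    exact Nat.find_le ⟨hn, heq⟩
  have hm_inj : ∀ F F', F ∈ edgeSets H → F' ∈ edgeSets H → m F = m F' → F = F' := by
    intro F F' hF hF' hmm
    rw [← hm_eq F hF, ← hm_eq F' hF']
    congr 2
    exact Fin.ext hmm
  -- sort edges of H by m
  set r : Finset VH → Finset VH → Prop := fun a b => m a ≤ m b with hr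
  haveI : DecidableRel r := fun a b => Nat.decLe _ _
  haveI hrtot : Std.Total r := ⟨fun a b => Nat.le_total _ _⟩
  haveI hrtrans : IsTrans (Finset VH) r := ⟨fun a b c => Nat.le_trans⟩
  set lH : List (Finset VH) := List.insertionSort r (edgeSets H).toList with hlH
  have hperm : List.Perm lH ((edgeSets H).toList) := List.perm_insertionSort r _
  have hndH : lH.Nodup := hperm.nodup_iff.2 (Finset.nodup_toList _)
  have htfH : lH.toFinset = edgeSets H := by
    rw [List.toFinset_eq_of_perm _ _ hperm]
    exact Finset.toList_toFinset _
  have hmemH : ∀ F, F ∈ lH ↔ F ∈ edgeSets H := by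
    intro F
    rw [← htfH, List.mem_toFinset]
  have hsorted : List.Pairwise r lH := List.pairwise_insertionSort r _
  have hmono : ∀ a b : Fin lH.length, (a : ℕ) ≤ (b : ℕ) → m (lH.get a) ≤ m (lH.get b) := by
    intro a b hab
    rcases eq_or_lt_of_le hab with h | h
    · rw [Fin.ext h]
    · exact hsorted.rel_get_of_lt h
  have hgetmem : ∀ a : Fin lH.length, lH.get a ∈ edgeSets H := by
    intro a
    exact (hmemH _).1 (List.get_mem lH a)
  refine ⟨lH, hndH, htfH, ?_⟩
  intro i j hij
  set F := lH.get i with hF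
  set F' := lH.get j with hF'
  have hFmem : F ∈ edgeSets H := hgetmem i
  have hF'mem : F' ∈ edgeSets H := hgetmem j
  have hneFF' : F ≠ F' := by
    intro h
    exact absurd (Fin.ext_iff.1 ((List.Nodup.get_inj_iff hndH).1 h)) (Nat.ne_of_lt hij)
  have hcardF : F.card = 2 := card_of_mem_edgeSets H hFmem
  have hcardF' : F'.card = 2 := card_of_mem_edgeSets H hF'mem
  by_cases hdisj : F ∩ F' = ∅
  · -- disjoint case: lift the linking edge from G
    have hmlt : m F < m F' := by
      refine lt_of_le_of_ne (hmono i j (le_of_lt hij)) fun h => hneFF' (hm_inj _ _ hFmem hF'mem h)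
    set iG : Fin l.length := ⟨m F, hm_lt F hFmem⟩ with hiG
    set jG : Fin l.length := ⟨m F', hm_lt F' hF'mem⟩ with hjG
    obtain ⟨k, hklt, hkcard, hksub1, hksub2⟩ := hsh iG jG hmlt
    set ei := l.get iG with hei
    set ej := l.get jG with hej
    set ek := l.get k with hek
    have heiF : Finset.image f ei = F := hm_eq F hFmem
    have hejF' : Finset.image f ej = F' := hm_eq F' hF'mem
    have hekG : ek ∈ edgeSets G := by
      rw [← htf, List.mem_toFinset]; exact List.get_mem l k
    have hejG : ej ∈ edgeSets G := by
      rw [← htf, List.mem_toFinset]; exact List.get_mem l jG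
    have hcardek : ek.card = 2 := card_of_mem_edgeSets G hekG
    have hcardej : ej.card = 2 := card_of_mem_edgeSets G hejG
    -- ej ∩ ek = {w}
    have hinter : (ej ∩ ek).card = 1 := by
      have := Finset.card_inter_add_card_sdiff ej ek
      omega
    obtain ⟨w, hw⟩ := Finset.card_eq_one.1 hinter
    have hwej : w ∈ ej := (Finset.mem_inter.1 (hw ▸ Finset.mem_singleton_self w)).1
    have hwek : w ∈ ek := (Finset.mem_inter.1 (hw ▸ Finset.mem_singleton_self w)).2
    -- get the other endpoint u of ek, adjacent to w
    obtain ⟨p, q, hpq, hekpq⟩ := (mem_edgeSets_iff G ek).1 hekG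
    have huexists : ∃ u, u ∈ ek ∧ u ≠ w ∧ G.Adj u w := by
      rw [hekpq] at hwek ⊢
      rcases Finset.mem_insert.1 hwek with rfl | hq
      · exact ⟨q, by simp, hpq.ne', hpq.symm⟩
      · rw [Finset.mem_singleton] at hq
        subst hq
        exact ⟨p, by simp, hpq.ne, hpq⟩
    obtain ⟨u, huek, hune, hadjuw⟩ := huexists
    -- u ∈ ei
    have huei : u ∈ ei := by
      rcases Finset.mem_union.1 (hksub2 huek) with h | h
      · exact h
      · exfalso
        have : u ∈ ej ∩ ek := Finset.mem_inter.2 ⟨h, huek⟩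
        rw [hw, Finset.mem_singleton] at this
        exact hune this
    have hfuF : f u ∈ F := heiF ▸ Finset.mem_image_of_mem f huei
    have hfwF' : f w ∈ F' := hejF' ▸ Finset.mem_image_of_mem f hwej
    have hfne : f u ≠ f w := by
      intro h
      have : f u ∈ F ∩ F' := Finset.mem_inter.2 ⟨hfuF, h ▸ hfwF'⟩
      rw [hdisj] at this
      exact absurd this (Finset.notMem_empty _)
    have hadjH : H.Adj (f u) (f w) := ha u w hadjuw hfne
    set F'' : Finset VH := {f u, f w} with hF''
    have hF''mem : F'' ∈ edgeSets H := (mem_edgeSets_iff H F'').2 ⟨f u, f w, hadjH, rfl⟩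
    -- ek = {u, w}, so image f ek = F''
    have hekuw : ek = {u, w} := by
      refine (Finset.eq_of_subset_of_card_le ?_ ?_).symm
      · intro x hx
        rcases Finset.mem_insert.1 hx with rfl | hx
        · exact huek
        · rw [Finset.mem_singleton] at hx; exact hx ▸ hwek
      · rw [hcardek, Finset.card_pair hune]
    have hmF'' : m F'' ≤ (k : ℕ) := by
      refine hm_min F'' hF''mem k k.2 ?_
      show Finset.image f (l.get ⟨(k : ℕ), k.2⟩) = F''
      rw [Fin.eta, ← hek, hekuw]
      simp [Finset.image_insert, hF'']
    -- find F'' in lH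
    obtain ⟨kH, hkH⟩ := List.mem_iff_get.1 ((hmemH F'').2 hF''mem)
    have hkHj : (kH : ℕ) < (j : ℕ) := by
      by_contra hcon
      push_neg at hcon
      have h1 : m F' ≤ m F'' := by
        have := hmono j kH hcon
        rwa [hkH, ← hF'] at this
      have h2 : (k : ℕ) < m F' := hklt
      omega
    refine ⟨kH, hkHj, ?_, ?_, ?_⟩
    · -- (F' \ F'').card = 1
      rw [show lH.get kH = F'' from hkH]
      have hfuF' : f u ∉ F' := by
        intro h
        have : f u ∈ F ∩ F' := Finset.mem_inter.2 ⟨hfuF, h⟩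
        rw [hdisj] at this
        exact absurd this (Finset.notMem_empty _)
      have hFF'' : F' \ F'' = F'.erase (f w) := by
        ext x
        simp only [hF'', Finset.mem_sdiff, Finset.mem_insert, Finset.mem_singleton,
          Finset.mem_erase]
        constructor
        · rintro ⟨hx, hx2⟩
          exact ⟨fun h => hx2 (Or.inr h), hx⟩
        · rintro ⟨hx, hx2⟩
          refine ⟨hx2, ?_⟩
          rintro (rfl | rfl)
          · exact hfuF' hx2
          · exact hx rfl
      rw [hFF'', Finset.card_erase_of_mem hfwF', hcardF']
    · rw [show lH.get kH = F'' from hkH]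
      rw [hdisj]
      exact Finset.empty_subset _
    · rw [show lH.get kH = F'' from hkH]
      intro x hx
      rcases Finset.mem_insert.1 hx with rfl | hx
      · exact Finset.mem_union_left _ hfuF
      · rw [Finset.mem_singleton] at hx
        exact Finset.mem_union_right _ (hx ▸ hfwF')
  · -- sharing a vertex: take k = i
    refine ⟨i, hij, ?_, Finset.inter_subset_left, Finset.subset_union_left⟩
    show (F' \ F).card = 1
    have hinter1 : (F' ∩ F).card = 1 := by
      have hne : (F' ∩ F).Nonempty := by
        rw [Finset.inter_comm]
        exact Finset.nonempty_iff_ne_empty.2 hdisj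
      have hle : (F' ∩ F).card ≤ 2 := by
        calc (F' ∩ F).card ≤ F'.card := Finset.card_le_card Finset.inter_subset_left
        _ = 2 := hcardF'
      interval_cases h : (F' ∩ F).card
      · exact absurd (Finset.card_eq_zero.1 h) (Finset.nonempty_iff_ne_empty.1 hne)
      · rfl
      · exfalso
        have : F' ∩ F = F' := Finset.eq_of_subset_of_card_le Finset.inter_subset_left (by omega)
        have hsub : F' ⊆ F := this ▸ Finset.inter_subset_right
        exact hneFF' (Finset.eq_of_subset_of_card_le hsub (by omega)).symm
    have := Finset.card_inter_add_card_sdiff F' F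
    omega
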